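/- Let χ be the probability measure on [0,∞) × [0,2π) given by dχ(r,θ) = e^{−r} dr ⊗ (1/(2π)) dθ. Then for every c ≥ 0 and z ∈ ℂ, ∫ exp(i·c·√r·Re(e^{iθ} z)) dχ(r,θ) = exp(−c²|z|²/4). -/

import Mathlib

open MeasureTheory Real Set
open scoped ENNReal NNReal

noncomputable def F0 (c : ℝ) (z : ℂ) : ℂ → ℂ := fun w =>
  (Real.pi)⁻¹ • (Real.exp (-Complex.normSq w) • Complex.exp (Complex.I * c * ((w * z).re)))

noncomputable def K0 (c : ℝ) (z : ℂ) (s θ : ℝ) : ℂ :=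
  Complex.exp (Complex.I * c * s * ((Complex.exp (Complex.I * θ)) * z).re)

lemma K0_norm (c : ℝ) (z : ℂ) (s θ : ℝ) : ‖K0 c z s θ‖ = 1 := by
  rw [K0, Complex.norm_exp]
  simp [Complex.mul_re, Complex.mul_im]

lemma K0_continuous (c : ℝ) (z : ℂ) : Continuous fun p : ℝ × ℝ => K0 c z (Real.sqrt p.1) p.2 := by
  unfold K0
  fun_prop

lemma K0_periodic (c : ℝ) (z : ℂ) (s : ℝ) : Function.Periodic (K0 c z s) (2*Real.pi) := by
  intro θ
  have hE : Complex.exp (Complex.I * ((θ : ℂ) + 2*Real.pi)) = Complex.exp (Complex.I * θ) := by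
    rw [show (Complex.I * ((θ:ℂ) + 2*Real.pi)) = Complex.I*θ + 2*Real.pi*Complex.I by push_cast; ring,
      Complex.exp_add, Complex.exp_two_pi_mul_I, mul_one]
  simp only [K0]
  push_cast
  rw [hE]

lemma hFp' (c : ℝ) (z : ℂ) (p : ℝ × ℝ) :
    F0 c z (Complex.polarCoord.symm p)
      = ((Real.pi)⁻¹ * Real.exp (-(p.1^2))) • K0 c z p.1 p.2 := by
  rw [Complex.polarCoord_symm_apply, F0, K0, smul_smul]
  congr 2
  · congr 1
    rw [Complex.normSq_mul, Complex.normSq_ofReal]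
    simp only [Complex.normSq_apply, Complex.add_re, Complex.ofReal_re, Complex.mul_re,
      Complex.ofReal_im, Complex.I_re, Complex.I_im, Complex.add_im, Complex.mul_im]
    linear_combination (-(p.1*p.1)) * (Real.cos_sq_add_sin_sq p.2)
  · rw [show (Complex.I * p.2) = (p.2 : ℂ) * Complex.I by ring, Complex.exp_mul_I]
    rw [mul_assoc ((p.1 : ℂ)), Complex.re_ofReal_mul]
    push_cast
    ring

lemma aux_gauss (t : ℝ) : ∫ x : ℝ, Complex.exp ((-1)*(x:ℂ)^2 + (Complex.I*t)*x + 0)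
    = (Real.pi : ℂ)^(1/2 : ℂ) * Complex.exp (-((t:ℂ)^2/4)) := by
  rw [integral_cexp_quadratic (by norm_num) (Complex.I*t) 0]
  norm_num
  congr 1
  rw [mul_pow, Complex.I_sq]
  ring

lemma int_F0 (c : ℝ) (z : ℂ) :
    ∫ w : ℂ, F0 c z w = Real.exp (-(c^2 * ‖z‖^2 / 4)) := by
  have hπ := Real.pi_pos
  have hπ0 : (Real.pi : ℂ) ≠ 0 := Complex.ofReal_ne_zero.mpr hπ.ne'
  set g₁ : ℝ → ℂ := fun x : ℝ =>
    Complex.exp ((-1)*(x:ℂ)^2 + (Complex.I*((c*z.re : ℝ):ℂ))*(x:ℂ) + 0) with hg1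
  set g₂ : ℝ → ℂ := fun y : ℝ =>
    Complex.exp ((-1)*(y:ℂ)^2 + (Complex.I*(((-(c*z.im)) : ℝ):ℂ))*(y:ℂ) + 0) with hg2
  have step1 : ∫ w : ℂ, F0 c z w = (Real.pi)⁻¹ • ((∫ x : ℝ, g₁ x) * (∫ y : ℝ, g₂ y)) := by
    rw [← (Complex.volume_preserving_equiv_real_prod.symm).integral_comp
        Complex.measurableEquivRealProd.symm.measurableEmbedding (F0 c z)]
    have h : ∀ p : ℝ × ℝ, F0 c z (Complex.measurableEquivRealProd.symm p)
        = (Real.pi)⁻¹ • (g₁ p.1 * g₂ p.2) := by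
      intro p
      simp only [F0, Complex.measurableEquivRealProd_symm_apply, hg1, hg2]
      congr 1
      rw [Complex.normSq_mk, Complex.mul_re]
      show (Real.exp (-(p.1*p.1+p.2*p.2)) : ℂ) * _ = _
      rw [Complex.ofReal_exp, ← Complex.exp_add, ← Complex.exp_add]
      congr 1
      push_cast
      ring
    simp only [h]
    rw [integral_smul, Measure.volume_eq_prod, integral_prod_mul]
  rw [step1, hg1, hg2, aux_gauss (c*z.re), aux_gauss (-(c*z.im)),
    Complex.ofReal_exp, Complex.real_smul, mul_mul_mul_comm,
    ← Complex.cpow_add _ _ hπ0, show (1/2 : ℂ)+(1/2 : ℂ) = 1 by norm_num, Complex.cpow_one,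
    ← Complex.exp_add, Complex.ofReal_inv, ← mul_assoc, inv_mul_cancel₀ hπ0, one_mul]
  congr 1
  have habs : (‖z‖)^2 = z.re^2 + z.im^2 := by
    rw [Complex.sq_norm, Complex.normSq_apply]; ring
  rw [habs]
  push_cast
  ring

theorem stmt_3 (c : ℝ) (hc : 0 ≤ c) (z : ℂ) :
    let χ : Measure (ℝ × ℝ) :=
      ((volume.restrict (Set.Ici (0:ℝ))).withDensity
          fun r => ENNReal.ofReal (Real.exp (-r))).prod
        (ENNReal.ofReal (1/(2*Real.pi)) • volume.restrict (Set.Ico (0:ℝ) (2*Real.pi)))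
    IsProbabilityMeasure χ ∧
      ∫ p : ℝ × ℝ, Complex.exp (Complex.I * c * Real.sqrt p.1 *
          ((Complex.exp (Complex.I * p.2)) * z).re) ∂χ
        = Real.exp (-(c^2 * ‖z‖^2 / 4)) := by
  intro χ
  have hπ := Real.pi_pos
  set μ : Measure ℝ := (volume.restrict (Set.Ici (0:ℝ))).withDensity
      fun r => ENNReal.ofReal (Real.exp (-r)) with hμdef
  set ν : Measure ℝ := ENNReal.ofReal (1/(2*Real.pi)) • volume.restrict (Set.Ico (0:ℝ) (2*Real.pi))
    with hνdef
  have hμ : IsProbabilityMeasure μ := by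
    constructor
    rw [hμdef, withDensity_apply _ MeasurableSet.univ, Measure.restrict_univ,
      ← ofReal_integral_eq_lintegral_ofReal]
    · rw [integral_Ici_eq_integral_Ioi, integral_exp_neg_Ioi]; simp
    · rw [show Integrable (fun a => rexp (-a)) (volume.restrict (Ici 0)) ↔
        IntegrableOn (fun a => rexp (-a)) (Ici 0) volume from Iff.rfl,
        integrableOn_Ici_iff_integrableOn_Ioi]
      simpa using exp_neg_integrableOn_Ioi 0 one_pos
    · filter_upwards with x using (Real.exp_nonneg _)
  have hν : IsProbabilityMeasure ν := by
    constructor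
    rw [hνdef, Measure.smul_apply, Measure.restrict_apply MeasurableSet.univ, Set.univ_inter,
      Real.volume_Ico, smul_eq_mul, ← ENNReal.ofReal_mul (by positivity)]
    rw [show 1/(2*Real.pi) * (2*Real.pi - 0) = 1 by rw [sub_zero]; field_simp]
    simp
  haveI := hμ; haveI := hν
  have hχ : IsProbabilityMeasure χ := by
    rw [show χ = μ.prod ν from rfl]; infer_instance
  refine ⟨hχ, ?_⟩
  -- the integrand
  have hshow : (∫ p : ℝ × ℝ, Complex.exp (Complex.I * c * Real.sqrt p.1 *
      ((Complex.exp (Complex.I * p.2)) * z).re) ∂χ)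
      = ∫ p : ℝ × ℝ, K0 c z (Real.sqrt p.1) p.2 ∂(μ.prod ν) := rfl
  rw [hshow]
  -- integrability for Fubini
  have hint : Integrable (fun p : ℝ × ℝ => K0 c z (Real.sqrt p.1) p.2) (μ.prod ν) := by
    refine Integrable.mono' (integrable_const (1:ℝ))
      (K0_continuous c z).aestronglyMeasurable ?_
    filter_upwards with p
    rw [K0_norm]
  rw [MeasureTheory.integral_prod _ hint]
  -- inner θ integral
  have hinner : ∀ r : ℝ, (∫ θ, K0 c z (Real.sqrt r) θ ∂ν)
      = (1/(2*Real.pi)) • ∫ θ in Set.Ioo (-Real.pi) Real.pi, K0 c z (Real.sqrt r) θ := by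
    intro r
    rw [hνdef, integral_smul_measure, ENNReal.toReal_ofReal (by positivity)]
    congr 1
    rw [integral_Ico_eq_integral_Ioo, ← integral_Ioc_eq_integral_Ioo,
      ← intervalIntegral.integral_of_le (by positivity),
      show (2*Real.pi) = 0 + 2*Real.pi by ring,
      (K0_periodic c z (Real.sqrt r)).intervalIntegral_add_eq 0 (-Real.pi),
      show -Real.pi + 2*Real.pi = Real.pi by ring,
      intervalIntegral.integral_of_le (by linarith), integral_Ioc_eq_integral_Ioo]
  simp only [hinner]
  -- withDensity
  set g : ℝ → ℂ := fun r =>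
    (1/(2*Real.pi)) • ∫ θ in Set.Ioo (-Real.pi) Real.pi, K0 c z (Real.sqrt r) θ with hgdef
  have hwd : (∫ r, g r ∂μ) = ∫ r in Set.Ici (0:ℝ), Real.exp (-r) • g r := by
    rw [hμdef]
    rw [show (fun r : ℝ => ENNReal.ofReal (Real.exp (-r)))
        = (fun r : ℝ => ((Real.exp (-r)).toNNReal : ℝ≥0∞)) from rfl]
    rw [integral_withDensity_eq_integral_smul (f := fun r : ℝ => (Real.exp (-r)).toNNReal)
      (measurable_real_toNNReal.comp (Real.measurable_exp.comp measurable_neg))]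
    congr 1
    funext r
    rw [NNReal.smul_def, Real.coe_toNNReal _ (Real.exp_nonneg _)]
  rw [hwd, integral_Ici_eq_integral_Ioi]
  -- substitution r = s^2
  have hsub : (∫ r in Set.Ioi (0:ℝ), Real.exp (-r) • g r)
      = ∫ s in Set.Ioi (0:ℝ), ∫ θ in Set.Ioo (-Real.pi) Real.pi,
          (s • F0 c z (Complex.polarCoord.symm (s, θ))) := by
    rw [← integral_comp_rpow_Ioi_of_pos (g := fun r => Real.exp (-r) • g r) two_pos]
    refine setIntegral_congr_fun measurableSet_Ioi ?_
    intro s hs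
    have hs' : (0:ℝ) < s := hs
    have h2 : s ^ ((2:ℝ)) = s^2 := by
      rw [show ((2:ℝ)) = ((2:ℕ):ℝ) by norm_num, Real.rpow_natCast]
    have h1 : s ^ ((2:ℝ)-1) = s := by
      norm_num
    simp only [h1, h2, hgdef, Real.sqrt_sq hs'.le]
    simp only [hFp' c z, smul_smul]
    rw [integral_smul]
    congr 1
    field_simp
  rw [hsub]
  -- Fubini back to the product set, then polar coordinates
  have hint2 : IntegrableOn (fun p : ℝ × ℝ => p.1 • F0 c z (Complex.polarCoord.symm p))
      (Set.Ioi (0:ℝ) ×ˢ Set.Ioo (-Real.pi) Real.pi) := by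
    rw [IntegrableOn, Measure.volume_eq_prod, ← Measure.prod_restrict]
    have hb : Integrable (fun p : ℝ × ℝ => (|p.1| * Real.exp (-(p.1^2)) * Real.pi⁻¹) * 1)
        ((volume.restrict (Set.Ioi (0:ℝ))).prod
          (volume.restrict (Set.Ioo (-Real.pi) Real.pi))) := by
      refine Integrable.mul_prod (f := fun x => |x| * rexp (-x^2) * Real.pi⁻¹) (g := fun _ => (1:ℝ)) ?_ ?_
      · have := ((integrable_mul_exp_neg_mul_sq (b := 1) one_pos).abs.const_mul
          (Real.pi⁻¹)).restrict (s := Set.Ioi (0:ℝ))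
        refine this.congr ?_
        filter_upwards with x
        rw [abs_mul, abs_of_pos (Real.exp_pos _)]
        push_cast
        ring_nf
      · exact ((integrableOn_const_iff).mpr (Or.inr measure_Ioo_lt_top))
    refine Integrable.mono' hb ?_ ?_
    · have hcont : Continuous (fun p : ℝ × ℝ =>
          p.1 • (((Real.pi)⁻¹ * Real.exp (-(p.1^2))) • K0 c z p.1 p.2)) := by
        unfold K0
        fun_prop
      have : (fun p : ℝ × ℝ => p.1 • F0 c z (Complex.polarCoord.symm p))
          = fun p : ℝ × ℝ => p.1 • (((Real.pi)⁻¹ * Real.exp (-(p.1^2))) • K0 c z p.1 p.2) := by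
        funext p; rw [hFp']
      rw [this]
      exact hcont.aestronglyMeasurable
    · filter_upwards with p
      rw [hFp', norm_smul, norm_smul, K0_norm, Real.norm_eq_abs, Real.norm_eq_abs,
        abs_of_pos (by positivity : (0:ℝ) < Real.pi⁻¹ * Real.exp (-(p.1^2)))]
      ring_nf
      exact le_refl _
  rw [← setIntegral_prod _ hint2, ← (show polarCoord.target = Set.Ioi (0:ℝ) ×ˢ Set.Ioo (-Real.pi) Real.pi from rfl), ← Measure.volume_eq_prod,
    Complex.integral_comp_polarCoord_symm (F0 c z)]
  exact int_F0 c z
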